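/- Let A and B be n×n positive definite complex matrices, and let S = { C : n×n complex matrix | fromBlocks A C Cᴴ B is positive semidefinite }. Then S is a convex set (over ℝ), and every extreme point C of S satisfies C = √A · U · √B for some unitary n×n matrix U. -/

import Mathlib

set_option maxHeartbeats 1000000

open Matrix
open scoped ComplexOrder

/-- The positive semidefinite square root of a positive semidefinite matrix
(the definition `Matrix.PosSemidef.sqrt` of the older Mathlib, since removed). -/
noncomputable def Matrix.PosSemidef.sqrt {n 𝕜 : Type*} [Fintype n] [RCLike 𝕜] [DecidableEq n]
    {A : Matrix n n 𝕜} (hA : A.PosSemidef) : Matrix n n 𝕜 :=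
  hA.1.eigenvectorUnitary.1 * diagonal ((↑) ∘ (√·) ∘ hA.1.eigenvalues) *
  (star hA.1.eigenvectorUnitary : Matrix n n 𝕜)

lemma Matrix.PosSemidef.sqrt_mul_self {m : Type*} [Fintype m] [DecidableEq m]
    {A : Matrix m m ℂ} (hA : A.PosSemidef) : hA.sqrt * hA.sqrt = A := by
  have hU := Unitary.coe_star_mul_self hA.1.eigenvectorUnitary
  have hD : diagonal (((↑) ∘ (√·) ∘ hA.1.eigenvalues : m → ℂ)) *
      diagonal ((↑) ∘ (√·) ∘ hA.1.eigenvalues)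
      = diagonal (RCLike.ofReal ∘ hA.1.eigenvalues) := by
    rw [diagonal_mul_diagonal]
    congr 1
    funext i
    simp only [Function.comp_apply]
    rw [← Complex.ofReal_mul, Real.mul_self_sqrt (hA.eigenvalues_nonneg i)]
    rfl
  conv_rhs => rw [hA.1.spectral_theorem, Unitary.conjStarAlgAut_apply]
  unfold Matrix.PosSemidef.sqrt
  calc _ = (hA.1.eigenvectorUnitary.1 * diagonal (((↑) ∘ (√·) ∘ hA.1.eigenvalues : m → ℂ))) *
        ((star hA.1.eigenvectorUnitary : Matrix m m ℂ) * hA.1.eigenvectorUnitary.1) *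
        (diagonal ((↑) ∘ (√·) ∘ hA.1.eigenvalues) *
        (star hA.1.eigenvectorUnitary : Matrix m m ℂ)) := by simp only [Matrix.mul_assoc]; rfl
    _ = _ := by rw [hU, Matrix.mul_one, Matrix.mul_assoc, ← Matrix.mul_assoc _ _ (star _ : Matrix m m ℂ), hD,
          ← Matrix.mul_assoc]

lemma Matrix.PosSemidef.posSemidef_sqrt {m : Type*} [Fintype m] [DecidableEq m]
    {A : Matrix m m ℂ} (hA : A.PosSemidef) : hA.sqrt.PosSemidef := by
  unfold Matrix.PosSemidef.sqrt
  have h := (Matrix.posSemidef_diagonal_iff.mpr (fun i =>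
    (show (0:ℂ) ≤ (((↑) ∘ (√·) ∘ hA.1.eigenvalues : m → ℂ)) i from
      Complex.zero_le_real.mpr (Real.sqrt_nonneg _)))).mul_mul_conjTranspose_same
    (hA.1.eigenvectorUnitary.1)
  simpa [star_eq_conjTranspose] using h

section helpers

variable {n : ℕ}

private lemma psd_smul_c {m : Type*} [Fintype m] {M : Matrix m m ℂ} (hM : M.PosSemidef) {c : ℂ}
    (hc : 0 ≤ c) : (c • M).PosSemidef := by
  have hcs : star c = c := by
    rw [Complex.star_def, Complex.conj_eq_iff_im]
    exact ((Complex.le_def.mp hc).2).symm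
  constructor
  · show (c • M)ᴴ = c • M
    rw [conjTranspose_smul, hcs, hM.1.eq]
  · exact (hM.smul hc).2

private lemma psd_conj_iff {M Q : Matrix (Fin n) (Fin n) ℂ} (hQ : Q.IsHermitian)
    (hQu : IsUnit Q.det) : (Q * M * Q).PosSemidef ↔ M.PosSemidef := by
  constructor
  · intro h
    have h2 := h.mul_mul_conjTranspose_same Q⁻¹
    have hQinv : (Q⁻¹)ᴴ = Q⁻¹ := by rw [conjTranspose_nonsing_inv, hQ.eq]
    rw [hQinv] at h2
    have : Q⁻¹ * (Q * M * Q) * Q⁻¹ = M := by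
      calc Q⁻¹ * (Q * M * Q) * Q⁻¹ = (Q⁻¹ * Q) * M * (Q * Q⁻¹) := by noncomm_ring
        _ = M := by rw [Q.nonsing_inv_mul hQu, Q.mul_nonsing_inv hQu, one_mul, mul_one]
    rwa [this] at h2
  · intro h
    have := h.mul_mul_conjTranspose_same Q
    rwa [hQ.eq] at this

private lemma exists_pos_smul_le_one {M : Matrix (Fin n) (Fin n) ℂ} (hM : M.PosSemidef) :
    ∃ ε : ℝ, 0 < ε ∧ ((1 : Matrix (Fin n) (Fin n) ℂ) - (ε : ℂ) • M).PosSemidef := by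
  classical
  have hH := hM.1
  set lam := hH.eigenvalues with hlam
  have hnn : ∀ i, 0 ≤ lam i := hM.eigenvalues_nonneg
  set s : ℝ := 1 + ∑ i, lam i with hs
  have hssum : 0 ≤ ∑ i, lam i := Finset.sum_nonneg fun i _ => hnn i
  have hspos : 0 < s := by positivity
  refine ⟨1 / s, by positivity, ?_⟩
  set V : Matrix (Fin n) (Fin n) ℂ := (hH.eigenvectorUnitary : Matrix (Fin n) (Fin n) ℂ) with hV
  have hVV : V * Vᴴ = 1 := by
    simpa [hV, star_eq_conjTranspose] using (Matrix.mem_unitaryGroup_iff).mp hH.eigenvectorUnitary.2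
  have hspec : M = V * diagonal (RCLike.ofReal ∘ lam) * Vᴴ := by
    simpa [hV, star_eq_conjTranspose] using hH.spectral_theorem
  have key : (1 : Matrix (Fin n) (Fin n) ℂ) - ((1/s : ℝ) : ℂ) • M
      = V * diagonal (fun i => ((1 - (1/s) * lam i : ℝ) : ℂ)) * Vᴴ := by
    have h1 : (1 : Matrix (Fin n) (Fin n) ℂ) = V * 1 * Vᴴ := by rw [mul_one, hVV]
    rw [hspec, h1]
    rw [← smul_mul_assoc, ← mul_smul_comm, ← Matrix.sub_mul, ← Matrix.mul_sub]
    congr 2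
    ext i j
    by_cases h : i = j
    · subst h
      simp only [Matrix.sub_apply, Matrix.one_apply_eq, Matrix.smul_apply,
        Matrix.diagonal_apply_eq, Function.comp_apply, smul_eq_mul]
      push_cast
      norm_num
    · simp [Matrix.one_apply_ne h, Matrix.diagonal_apply_ne _ h]
  rw [key]
  refine Matrix.PosSemidef.mul_mul_conjTranspose_same ?_ V
  refine Matrix.PosSemidef.diagonal ?_
  intro j
  show (0:ℂ) ≤ ((1 - (1/s) * lam j : ℝ) : ℂ)
  rw [← Complex.ofReal_zero, Complex.real_le_real]
  have h1 : lam j ≤ s := by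
    have : lam j ≤ ∑ k, lam k := Finset.single_le_sum (fun k _ => hnn k) (Finset.mem_univ j)
    linarith
  have : (1/s) * lam j ≤ 1 := by
    rw [div_mul_eq_mul_div, one_mul, div_le_one hspos]; exact h1
  linarith

private lemma sqrt_det_isUnit {A : Matrix (Fin n) (Fin n) ℂ} (hA : A.PosDef) :
    IsUnit hA.posSemidef.sqrt.det := by
  have h1 : hA.posSemidef.sqrt.det * hA.posSemidef.sqrt.det = A.det := by
    rw [← det_mul, hA.posSemidef.sqrt_mul_self]
  have h2 : A.det ≠ 0 := by
    intro h
    exact absurd (h ▸ hA.det_pos) (lt_irrefl 0)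
  rw [isUnit_iff_ne_zero]
  intro h
  rw [h, mul_zero] at h1
  exact h2 h1.symm

private lemma bridge {A B : Matrix (Fin n) (Fin n) ℂ} (hA : A.PosDef) (hB : B.PosDef)
    (K : Matrix (Fin n) (Fin n) ℂ) :
    (fromBlocks A (hA.posSemidef.sqrt * K * hB.posSemidef.sqrt)
      (hA.posSemidef.sqrt * K * hB.posSemidef.sqrt)ᴴ B).PosSemidef ↔
      ((1 : Matrix (Fin n) (Fin n) ℂ) - Kᴴ * K).PosSemidef := by
  classical
  haveI := hA.isUnit.invertible
  set R := hA.posSemidef.sqrt with hRdef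
  set Q := hB.posSemidef.sqrt with hQdef
  have hRH : Rᴴ = R := hA.posSemidef.posSemidef_sqrt.1
  have hQH : Qᴴ = Q := hB.posSemidef.posSemidef_sqrt.1
  have hRR : R * R = A := hA.posSemidef.sqrt_mul_self
  have hQQ : Q * Q = B := hB.posSemidef.sqrt_mul_self
  have hRdet : IsUnit R.det := sqrt_det_isUnit hA
  have hQdet : IsUnit Q.det := sqrt_det_isUnit hB
  rw [Matrix.PosDef.fromBlocks₁₁ _ _ hA]
  have key : B - (R * K * Q)ᴴ * A⁻¹ * (R * K * Q) = Q * (1 - Kᴴ * K) * Q := by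
    have hCt : (R * K * Q)ᴴ = Q * Kᴴ * R := by
      rw [conjTranspose_mul, conjTranspose_mul, hRH, hQH]
      noncomm_ring
    have hAinv : A⁻¹ = R⁻¹ * R⁻¹ := by rw [← hRR, Matrix.mul_inv_rev]
    rw [hCt, hAinv]
    have : Q * Kᴴ * R * (R⁻¹ * R⁻¹) * (R * K * Q) = Q * (Kᴴ * K) * Q := by
      simp only [Matrix.mul_assoc]
      rw [Matrix.nonsing_inv_mul_cancel_left _ _ hRdet,
        Matrix.mul_nonsing_inv_cancel_left _ _ hRdet]
    rw [this, ← hQQ]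
    rw [Matrix.mul_sub, Matrix.sub_mul, Matrix.mul_one]
  rw [key]
  exact psd_conj_iff hQH hQdet

private lemma idPlus (N : Matrix (Fin n) (Fin n) ℂ) :
    (1 : Matrix (Fin n) (Fin n) ℂ) - (1 + (1/2:ℂ) • N) * (1 - N) * (1 + (1/2:ℂ) • N)
    = (3/4:ℂ) • (N * N) + (1/4:ℂ) • (N * N * N) := by
  simp only [Matrix.mul_add, Matrix.add_mul, Matrix.mul_sub, Matrix.sub_mul,
    Matrix.mul_one, Matrix.one_mul, smul_mul_assoc, mul_smul_comm, smul_smul,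
    smul_sub, smul_add, Matrix.mul_assoc]
  module

private lemma idMinus (N : Matrix (Fin n) (Fin n) ℂ) :
    (1 : Matrix (Fin n) (Fin n) ℂ) - (1 - (1/2:ℂ) • N) * (1 - N) * (1 - (1/2:ℂ) • N)
    = (3/4:ℂ) • N + (5/4:ℂ) • (N - N * N) + (1/4:ℂ) • (N * N * N) := by
  simp only [Matrix.mul_add, Matrix.add_mul, Matrix.mul_sub, Matrix.sub_mul,
    Matrix.mul_one, Matrix.one_mul, smul_mul_assoc, mul_smul_comm, smul_smul,
    smul_sub, smul_add, Matrix.mul_assoc]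
  module

private lemma cpos {r : ℝ} (h : 0 ≤ r) : (0:ℂ) ≤ (r:ℂ) := Complex.zero_le_real.mpr h

private lemma cpos' {x : ℂ} (hre : 0 ≤ x.re) (him : x.im = 0) : (0:ℂ) ≤ x := by
  rw [Complex.le_def]
  simpa using ⟨hre, him.symm⟩

end helpers

/-- For positive definite `A`, `B`, the set of matrices `C` such that the block matrix
`fromBlocks A C Cᴴ B` is positive semidefinite is convex (over `ℝ`), and its extreme
points are of the form `√A · U · √B` with `U` unitary. -/
theorem fromBlocks_posSemidef_convex_extremePoints {n : ℕ}
    (A B : Matrix (Fin n) (Fin n) ℂ) (hA : A.PosDef) (hB : B.PosDef) :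
    Convex ℝ {C : Matrix (Fin n) (Fin n) ℂ | (Matrix.fromBlocks A C Cᴴ B).PosSemidef} ∧
      ∀ C ∈ Set.extremePoints ℝ
          {C : Matrix (Fin n) (Fin n) ℂ | (Matrix.fromBlocks A C Cᴴ B).PosSemidef},
        ∃ U ∈ Matrix.unitaryGroup (Fin n) ℂ,
          C = hA.posSemidef.sqrt * U * hB.posSemidef.sqrt := by
  classical
  constructor
  · -- convexity
    intro C₁ h₁ C₂ h₂ a b ha hb hab
    have key : fromBlocks A (a • C₁ + b • C₂) (a • C₁ + b • C₂)ᴴ B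
        = a • fromBlocks A C₁ C₁ᴴ B + b • fromBlocks A C₂ C₂ᴴ B := by
      have hCc : (a • C₁ + b • C₂)ᴴ = a • C₁ᴴ + b • C₂ᴴ := by
        rw [conjTranspose_add, conjTranspose_smul, conjTranspose_smul, star_trivial, star_trivial]
      rw [Matrix.fromBlocks_smul, Matrix.fromBlocks_smul, Matrix.fromBlocks_add,
        Convex.combo_self hab A, Convex.combo_self hab B, ← hCc]
    show (fromBlocks A (a • C₁ + b • C₂) (a • C₁ + b • C₂)ᴴ B).PosSemidef
    rw [key]
    have h₁' : (fromBlocks A C₁ C₁ᴴ B).PosSemidef := h₁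
    have h₂' : (fromBlocks A C₂ C₂ᴴ B).PosSemidef := h₂
    have e1 : (a • fromBlocks A C₁ C₁ᴴ B : Matrix _ _ ℂ) = ((a:ℂ) • fromBlocks A C₁ C₁ᴴ B) := by
      ext i j; simp [Matrix.smul_apply, Complex.real_smul]
    have e2 : (b • fromBlocks A C₂ C₂ᴴ B : Matrix _ _ ℂ) = ((b:ℂ) • fromBlocks A C₂ C₂ᴴ B) := by
      ext i j; simp [Matrix.smul_apply, Complex.real_smul]
    rw [e1, e2]
    have s1 : ((a:ℂ) • fromBlocks A C₁ C₁ᴴ B).PosSemidef := psd_smul_c h₁' (cpos ha)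
    have s2 : ((b:ℂ) • fromBlocks A C₂ C₂ᴴ B).PosSemidef := psd_smul_c h₂' (cpos hb)
    exact s1.add s2
  · -- extreme points
    intro C hC
    obtain ⟨hCmem, hCex⟩ := hC
    set R := hA.posSemidef.sqrt with hRdef
    set Q := hB.posSemidef.sqrt with hQdef
    have hRdet : IsUnit R.det := sqrt_det_isUnit hA
    have hQdet : IsUnit Q.det := sqrt_det_isUnit hB
    set K := R⁻¹ * C * Q⁻¹ with hKdef
    have hCK : C = R * K * Q := by
      rw [hKdef]
      simp only [Matrix.mul_assoc]
      rw [Matrix.nonsing_inv_mul _ hQdet, Matrix.mul_one,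
        Matrix.mul_nonsing_inv_cancel_left _ _ hRdet]
    have hmem : ((1 : Matrix (Fin n) (Fin n) ℂ) - Kᴴ * K).PosSemidef :=
      (bridge hA hB K).mp (by rw [← hCK]; exact hCmem)
    -- the extremality tool
    have cancel : ∀ X Y : Matrix (Fin n) (Fin n) ℂ, R * X * Q = R * Y * Q → X = Y := by
      intro X Y h
      have := congrArg (fun Z => R⁻¹ * Z * Q⁻¹) h
      simpa only [Matrix.mul_assoc, Matrix.nonsing_inv_mul_cancel_left _ _ hRdet,
        Matrix.mul_nonsing_inv_cancel_left _ _ hQdet,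
        Matrix.mul_nonsing_inv_cancel_right _ _ hQdet, ← Matrix.mul_assoc,
        Matrix.mul_nonsing_inv _ hQdet, Matrix.mul_one] using this
    have tool : ∀ W : Matrix (Fin n) (Fin n) ℂ,
        ((1 : Matrix (Fin n) (Fin n) ℂ) - (K + W)ᴴ * (K + W)).PosSemidef →
        ((1 : Matrix (Fin n) (Fin n) ℂ) - (K - W)ᴴ * (K - W)).PosSemidef → W = 0 := by
      intro W h1 h2
      have m1 : R * (K + W) * Q ∈
          {C : Matrix (Fin n) (Fin n) ℂ | (Matrix.fromBlocks A C Cᴴ B).PosSemidef} :=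
        (bridge hA hB (K + W)).mpr h1
      have m2 : R * (K - W) * Q ∈
          {C : Matrix (Fin n) (Fin n) ℂ | (Matrix.fromBlocks A C Cᴴ B).PosSemidef} :=
        (bridge hA hB (K - W)).mpr h2
      have hseg : C ∈ openSegment ℝ (R * (K + W) * Q) (R * (K - W) * Q) := by
        refine ⟨1/2, 1/2, by norm_num, by norm_num, by norm_num, ?_⟩
        rw [hCK]
        simp only [Matrix.mul_add, Matrix.add_mul, Matrix.mul_sub, Matrix.sub_mul]
        module
      have := hCex m1 m2 hseg
      rw [hCK] at this
      have hKW : K + W = K := cancel _ _ this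
      simpa using hKW
    clear_value K R Q
    clear hKdef hRdet hQdet cancel hCmem hCex
    -- Step 1 : K * N = 0 where N = 1 - Kᴴ K
    set N : Matrix (Fin n) (Fin n) ℂ := 1 - Kᴴ * K with hNdef
    have hNH : Nᴴ = N := by
      rw [hNdef, conjTranspose_sub, conjTranspose_one, conjTranspose_mul,
        conjTranspose_conjTranspose]
    have hNpsd : N.PosSemidef := hmem
    have hMK : Kᴴ * K = 1 - N := by rw [hNdef]; abel
    clear_value N
    have hKN : K * N = 0 := by
      have hW := tool ((1/2 : ℂ) • (K * N)) ?_ ?_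
      · rcases smul_eq_zero.mp hW with h | h
        · norm_num at h
        · exact h
      · -- plus side
        have hfac : K + (1/2 : ℂ) • (K * N) = K * (1 + (1/2 : ℂ) • N) := by
          conv_rhs => rw [Matrix.mul_add, Matrix.mul_one]
          congr 1
          exact (mul_smul_comm _ _ _).symm
        rw [hfac]
        have hTH : (1 + (1/2 : ℂ) • N)ᴴ = 1 + (1/2 : ℂ) • N := by
          rw [conjTranspose_add, conjTranspose_one, conjTranspose_smul, hNH]
          norm_num
        have hexp : (1 : Matrix (Fin n) (Fin n) ℂ) - (K * (1 + (1/2 : ℂ) • N))ᴴ *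
            (K * (1 + (1/2 : ℂ) • N))
            = (3/4 : ℂ) • (N * N) + (1/4 : ℂ) • (N * N * N) := by
          have harr : (K * (1 + (1/2 : ℂ) • N))ᴴ * (K * (1 + (1/2 : ℂ) • N))
              = (1 + (1/2 : ℂ) • N) * (Kᴴ * K) * (1 + (1/2 : ℂ) • N) := by
            rw [conjTranspose_mul, hTH]
            noncomm_ring
          rw [harr, hMK]
          exact idPlus N
        rw [hexp]
        have p2 : (N * N).PosSemidef := by
          have := hNpsd.pow 2; rwa [pow_two] at this
        have p3 : (N * N * N).PosSemidef := by
          have := hNpsd.pow 3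
          rwa [pow_succ, pow_two] at this
        exact (psd_smul_c p2 (cpos' (by norm_num) (by norm_num))).add
          (psd_smul_c p3 (cpos' (by norm_num) (by norm_num)))
      · -- minus side
        have hfac : K - (1/2 : ℂ) • (K * N) = K * (1 - (1/2 : ℂ) • N) := by
          conv_rhs => rw [Matrix.mul_sub, Matrix.mul_one]
          congr 1
          exact (mul_smul_comm _ _ _).symm
        rw [hfac]
        have hTH : (1 - (1/2 : ℂ) • N)ᴴ = 1 - (1/2 : ℂ) • N := by
          rw [conjTranspose_sub, conjTranspose_one, conjTranspose_smul, hNH]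
          norm_num
        have hexp : (1 : Matrix (Fin n) (Fin n) ℂ) - (K * (1 - (1/2 : ℂ) • N))ᴴ *
            (K * (1 - (1/2 : ℂ) • N))
            = (3/4 : ℂ) • N + (5/4 : ℂ) • (N - N * N) + (1/4 : ℂ) • (N * N * N) := by
          have harr : (K * (1 - (1/2 : ℂ) • N))ᴴ * (K * (1 - (1/2 : ℂ) • N))
              = (1 - (1/2 : ℂ) • N) * (Kᴴ * K) * (1 - (1/2 : ℂ) • N) := by
            rw [conjTranspose_mul, hTH]
            noncomm_ring
          rw [harr, hMK]
          exact idMinus N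
        rw [hexp]
        have pNN : (N - N * N).PosSemidef := by
          set S := hNpsd.sqrt with hSdef
          have hSS : S * S = N := hNpsd.sqrt_mul_self
          have hSH : Sᴴ = S := hNpsd.posSemidef_sqrt.1
          have hval : S * (Kᴴ * K) * S = N - N * N := by
            rw [hMK, Matrix.mul_sub, Matrix.mul_one, Matrix.sub_mul, hSS]
            congr 1
            calc S * N * S = S * (S * S) * S := by rw [hSS]
              _ = (S * S) * (S * S) := by noncomm_ring
              _ = N * N := by rw [hSS]
          rw [← hval]
          have := (Matrix.posSemidef_conjTranspose_mul_self K).mul_mul_conjTranspose_same S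
          rwa [hSH] at this
        exact ((psd_smul_c hNpsd (cpos' (by norm_num) (by norm_num))).add
          (psd_smul_c pNN (cpos' (by norm_num) (by norm_num)))).add
          (psd_smul_c (by have := hNpsd.pow 3; rwa [pow_succ, pow_two] at this)
            (cpos' (by norm_num) (by norm_num)))
    have hKM : K * (Kᴴ * K) = K := by
      have : K * N = K - K * (Kᴴ * K) := by
        rw [hNdef, Matrix.mul_sub, Matrix.mul_one]
      rw [this] at hKN
      exact (sub_eq_zero.mp hKN).symm
    -- Step 2 : P X N = 0 for all X, where P = 1 - K Kᴴ
    set P : Matrix (Fin n) (Fin n) ℂ := 1 - K * Kᴴ with hPdef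
    have hPH : Pᴴ = P := by
      rw [hPdef, conjTranspose_sub, conjTranspose_one, conjTranspose_mul,
        conjTranspose_conjTranspose]
    clear_value P
    have hKKK : (Kᴴ * K) * Kᴴ = Kᴴ := by
      have := congrArg conjTranspose hKM
      rwa [conjTranspose_mul, conjTranspose_mul, conjTranspose_conjTranspose] at this
    have hKP : Kᴴ * P = 0 := by
      rw [hPdef, Matrix.mul_sub, Matrix.mul_one, ← Matrix.mul_assoc, hKKK, sub_self]
    have hPK : P * K = 0 := by
      have := congrArg conjTranspose hKP
      rwa [conjTranspose_mul, conjTranspose_conjTranspose, hPH, conjTranspose_zero] at this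
    have hNN : N * N = N := by
      have hMM : (Kᴴ * K) * (Kᴴ * K) = Kᴴ * K := by
        rw [Matrix.mul_assoc Kᴴ K, hKM]  -- (Kᴴ K)(Kᴴ K) = Kᴴ (K (Kᴴ K)) = Kᴴ K
      rw [hNdef]
      simp only [Matrix.mul_sub, Matrix.sub_mul, Matrix.mul_one, Matrix.one_mul]
      rw [hMM]
      abel
    have hPP : P * P = P := by
      have hMM' : (K * Kᴴ) * (K * Kᴴ) = K * Kᴴ := by
        calc (K * Kᴴ) * (K * Kᴴ) = (K * (Kᴴ * K)) * Kᴴ := by noncomm_ring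
          _ = K * Kᴴ := by rw [hKM]
      rw [hPdef]
      simp only [Matrix.mul_sub, Matrix.sub_mul, Matrix.mul_one, Matrix.one_mul]
      rw [hMM']
      abel
    have hPpsd : P.PosSemidef := by
      have : P * Pᴴ = P := by rw [hPH, hPP]
      rw [← this]
      exact Matrix.posSemidef_self_mul_conjTranspose P
    have key2 : ∀ X : Matrix (Fin n) (Fin n) ℂ, P * X * N = 0 := by
      intro X
      obtain ⟨ε, hε, hsmall⟩ := exists_pos_smul_le_one (Matrix.posSemidef_conjTranspose_mul_self X)
      set t : ℝ := Real.sqrt ε with htdef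
      have ht0 : (t:ℂ) ≠ 0 := by
        simp only [ne_eq, Complex.ofReal_eq_zero]
        exact (Real.sqrt_pos.mpr hε).ne'
      have ht2 : (t:ℂ) * (t:ℂ) = (ε:ℂ) := by
        rw [← Complex.ofReal_mul, Real.mul_self_sqrt hε.le]
      set W : Matrix (Fin n) (Fin n) ℂ := (t:ℂ) • (P * X * N) with hWdef
      have hWH : Wᴴ = (t:ℂ) • (N * Xᴴ * P) := by
        rw [hWdef, conjTranspose_smul, conjTranspose_mul, conjTranspose_mul, hNH, hPH,
          ← Matrix.mul_assoc]
        congr 1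
        simp [Complex.star_def, Complex.conj_ofReal]
      have hKtW : Kᴴ * W = 0 := by
        rw [hWdef, mul_smul_comm, ← Matrix.mul_assoc, ← Matrix.mul_assoc, hKP,
          Matrix.zero_mul, Matrix.zero_mul, smul_zero]
      have hWtK : Wᴴ * K = 0 := by
        rw [hWH, smul_mul_assoc, Matrix.mul_assoc, hPK, Matrix.mul_zero, smul_zero]
      have hWtW : Wᴴ * W = (ε:ℂ) • (N * (Xᴴ * (P * (X * N)))) := by
        rw [hWH, hWdef, smul_mul_assoc, mul_smul_comm, smul_smul, ht2]
        congr 1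
        calc N * Xᴴ * P * (P * X * N) = N * (Xᴴ * ((P * P) * (X * N))) := by noncomm_ring
          _ = N * (Xᴴ * (P * (X * N))) := by rw [hPP]
      have expand : ∀ s : ℂ, ((1 : Matrix (Fin n) (Fin n) ℂ) - (K + s • W)ᴴ * (K + s • W))
          = 1 - Kᴴ * K - (s * star s * ε) • (N * (Xᴴ * (P * (X * N)))) := by
        intro s
        have e1 : Kᴴ * (s • W) = 0 := by rw [mul_smul_comm, hKtW, smul_zero]
        have e2 : (s • W)ᴴ * K = 0 := by
          rw [conjTranspose_smul, smul_mul_assoc, hWtK, smul_zero]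
        have e3 : (s • W)ᴴ * (s • W) = (s * star s * ε) • (N * (Xᴴ * (P * (X * N)))) := by
          rw [conjTranspose_smul, smul_mul_assoc, mul_smul_comm, smul_smul, hWtW, smul_smul]
          congr 1
          ring
        rw [conjTranspose_add, Matrix.add_mul, Matrix.mul_add, Matrix.mul_add, e1, e2, e3,
          add_zero, zero_add, sub_add_eq_sub_sub]
      have hcontr : ((1 : Matrix (Fin n) (Fin n) ℂ)
          - (ε:ℂ) • (N * (Xᴴ * (P * (X * N)))) - Kᴴ * K).PosSemidef := by
        -- equals N - ε • N (Xᴴ P X) N  =  N (1 - ε Xᴴ P X) N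
        have hinner : ((1 : Matrix (Fin n) (Fin n) ℂ) - (ε:ℂ) • (Xᴴ * P * X)).PosSemidef := by
          have hsplit : (1 : Matrix (Fin n) (Fin n) ℂ) - (ε:ℂ) • (Xᴴ * P * X)
              = (1 - (ε:ℂ) • (Xᴴ * X)) + (ε:ℂ) • ((Kᴴ * X)ᴴ * (Kᴴ * X)) := by
            have : (Kᴴ * X)ᴴ * (Kᴴ * X) = Xᴴ * (K * Kᴴ) * X := by
              rw [conjTranspose_mul, conjTranspose_conjTranspose]; noncomm_ring
            rw [this, hPdef]
            simp only [Matrix.mul_sub, Matrix.sub_mul, Matrix.mul_one, Matrix.one_mul, smul_sub]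
            abel
          rw [hsplit]
          refine hsmall.add (psd_smul_c (Matrix.posSemidef_conjTranspose_mul_self _) ?_)
          exact cpos hε.le
        have hval : N * ((1 : Matrix (Fin n) (Fin n) ℂ) - (ε:ℂ) • (Xᴴ * P * X)) * Nᴴ
            = 1 - (ε:ℂ) • (N * (Xᴴ * (P * (X * N)))) - Kᴴ * K := by
          rw [hNH, Matrix.mul_sub, Matrix.sub_mul, Matrix.mul_one, hNN]
          have h2 : N * ((ε:ℂ) • (Xᴴ * P * X)) * N = (ε:ℂ) • (N * (Xᴴ * (P * (X * N)))) := by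
            rw [mul_smul_comm, smul_mul_assoc]
            congr 1
            noncomm_ring
          rw [h2, hNdef]
          abel
        rw [← hval]
        exact hinner.mul_mul_conjTranspose_same N
      have hW0 : W = 0 := by
        apply tool W
        · have h := expand 1
          simp only [one_smul, star_one, mul_one, one_mul] at h
          rw [h, sub_right_comm]
          exact hcontr
        · have h := expand (-1)
          simp only [neg_smul, one_smul, star_neg, star_one, mul_neg, neg_mul, neg_neg,
            mul_one, one_mul, ← sub_eq_add_neg] at h
          rw [h, sub_right_comm]
          exact hcontr
      rw [hWdef] at hW0
      rcases smul_eq_zero.mp hW0 with h | h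
      · exact absurd h ht0
      · exact h
    -- conclude P = 0 or N = 0
    have hPN : P = 0 ∨ N = 0 := by
      by_contra hcon
      push_neg at hcon
      obtain ⟨hP0, hN0⟩ := hcon
      have hPe : ∃ i k, P i k ≠ 0 := by
        by_contra h
        push_neg at h
        exact hP0 (by ext i k; simpa using h i k)
      have hNe : ∃ l j, N l j ≠ 0 := by
        by_contra h
        push_neg at h
        exact hN0 (by ext l j; simpa using h l j)
      obtain ⟨i, k, hik⟩ := hPe
      obtain ⟨l, j, hlj⟩ := hNe
      have h0 := congrFun (congrFun (key2 (single k l 1)) i) j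
      rw [Matrix.mul_assoc, Matrix.mul_apply] at h0
      have hsum : ∑ a, P i a * (single k l (1:ℂ) * N) a j = P i k * N l j := by
        rw [Finset.sum_eq_single k]
        · rw [Matrix.single_mul_apply_same (c := 1) k l j N, one_mul]
        · intro a _ ha
          rw [Matrix.single_mul_apply_of_ne (c := 1) k l a j ha N, mul_zero]
        · intro h; exact absurd (Finset.mem_univ k) h
      rw [hsum] at h0
      have h0' : P i k * N l j = 0 := by simpa using h0
      rcases mul_eq_zero.mp h0' with h | h
      · exact hik h
      · exact hlj h
    refine ⟨K, ?_, hCK⟩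
    rcases hPN with h | h
    · -- K Kᴴ = 1
      have : K * Kᴴ = 1 := by
        have := sub_eq_zero.mp (hPdef ▸ h)
        exact this.symm
      rw [Matrix.mem_unitaryGroup_iff, star_eq_conjTranspose]
      exact this
    · -- Kᴴ K = 1
      have : Kᴴ * K = 1 := by
        have := sub_eq_zero.mp (hNdef ▸ h)
        exact this.symm
      rw [Matrix.mem_unitaryGroup_iff', star_eq_conjTranspose]
      exact this
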